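/- Let F be a field of characteristic 2, let n > k ≥ 1, set r = n − k, and let f = Σ_{i=0}^{r} β_i X^i ∈ F[X] with β₀ ≠ 0 and β_r ≠ 0 be a divisor of Xⁿ − 1 of degree r. Let C be the cyclic code of length n generated by f, assume every nonzero codeword of C has Hamming weight at least d₁ and every nonzero codeword of the dual code of C has Hamming weight at least d₂, and set d = min(d₁, d₂). Fix t with 0 < t < r and define ĝ₁ = f − β_t X^t + X^t and ĝ₂ = f − β_t X^t in F[X]. Then for every nonzero polynomial u ∈ F[X], wt(u·ĝ₁) + wt(u·ĝ₂) ≥ d + 2; that is, the free distance of the (2,1) convolutional code with generator matrix (ĝ₁, ĝ₂) is at least d + 2. -/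

import Mathlib

open Polynomial Classical

namespace Stmt7A

variable {F : Type*} [Field F]


variable {F : Type*} [Field F]

lemma monicD (n : ℕ) (hn : 0 < n) : (X ^ n - 1 : F[X]).Monic := by
  simpa using monic_X_pow_sub_C (1 : F) hn.ne'

lemma dvdD_pow (n i : ℕ) : (X ^ n - 1 : F[X]) ∣ X ^ i - X ^ (i % n) := by
  rcases Nat.eq_zero_or_pos n with rfl | hn
  · simp
  have h : X ^ i = ((X : F[X]) ^ n) ^ (i / n) * X ^ (i % n) := by
    rw [← pow_mul, ← pow_add, Nat.div_add_mod]
  rw [h]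
  have : ((X : F[X]) ^ n) ^ (i / n) * X ^ (i % n) - X ^ (i % n)
      = (((X : F[X]) ^ n) ^ (i / n) - 1) * X ^ (i % n) := by ring
  rw [this]
  exact Dvd.dvd.mul_right (by simpa using sub_dvd_pow_sub_pow ((X : F[X]) ^ n) 1 (i / n)) _

noncomputable def redE (n : ℕ) (p : F[X]) : F[X] :=
  ∑ i ∈ p.support, C (p.coeff i) * X ^ (i % n)

lemma redE_coeff (n : ℕ) (p : F[X]) (j : ℕ) :
    (redE n p).coeff j = ∑ i ∈ p.support.filter (fun i => i % n = j), p.coeff i := by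
  rw [redE, finset_sum_coeff, Finset.sum_filter]
  refine Finset.sum_congr rfl fun i _ => ?_
  rw [coeff_C_mul, coeff_X_pow]
  by_cases h : i % n = j
  · simp [h]
  · simp [h, Ne.symm h, fun hh : j = i % n => h hh.symm]

lemma degree_redE_lt (n : ℕ) (hn : 0 < n) (p : F[X]) : (redE n p).degree < (n : ℕ) := by
  refine lt_of_le_of_lt (degree_sum_le _ _) ?_
  rw [Finset.sup_lt_iff (by exact_mod_cast WithBot.bot_lt_coe n)]
  intro i _
  refine lt_of_le_of_lt (degree_C_mul_X_pow_le _ _) ?_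
  exact_mod_cast Nat.mod_lt i hn

lemma modD_eq_redE (n : ℕ) (hn : 0 < n) (p : F[X]) :
    p %ₘ (X ^ n - 1) = redE n p := by
  have hm := monicD (F := F) n hn
  have hdvd : (X ^ n - 1 : F[X]) ∣ p - redE n p := by
    have hp : p = ∑ i ∈ p.support, C (p.coeff i) * X ^ i := by
      conv_lhs => rw [p.as_sum_support]
      exact Finset.sum_congr rfl fun i _ => (C_mul_X_pow_eq_monomial).symm
    have heq : p - redE n p = ∑ i ∈ p.support, C (p.coeff i) * (X ^ i - X ^ (i % n)) := by
      rw [redE]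
      nth_rewrite 1 [hp]
      rw [← Finset.sum_sub_distrib]
      exact Finset.sum_congr rfl fun i _ => by rw [mul_sub]
    rw [heq]
    refine Finset.dvd_sum fun i _ => ?_
    exact Dvd.dvd.mul_left (dvdD_pow n i) _
  have h1 : p %ₘ (X ^ n - 1) = (redE n p) %ₘ (X ^ n - 1) :=
    modByMonic_eq_of_dvd_sub hm hdvd
  rw [h1, (modByMonic_eq_self_iff hm).mpr]
  have : (1 : F[X]) = C 1 := C_1.symm
  rw [this, degree_X_pow_sub_C hn]
  exact degree_redE_lt n hn p

lemma modD_coeff (n : ℕ) (hn : 0 < n) (p : F[X]) (j : ℕ) :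
    (p %ₘ (X ^ n - 1)).coeff j
      = ∑ i ∈ p.support.filter (fun i => i % n = j), p.coeff i := by
  rw [modD_eq_redE n hn p, redE_coeff]

lemma modD_support_subset (n : ℕ) (hn : 0 < n) (p : F[X]) :
    (p %ₘ (X ^ n - 1)).support ⊆ p.support.image (· % n) := by
  intro j hj
  rw [mem_support_iff, modD_coeff n hn p j] at hj
  obtain ⟨i, hi, -⟩ := Finset.exists_ne_zero_of_sum_ne_zero hj
  rw [Finset.mem_filter] at hi
  exact Finset.mem_image.mpr ⟨i, hi.1, hi.2⟩

lemma modD_eq_zero_iff (n : ℕ) (hn : 0 < n) (p : F[X]) :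
    p %ₘ (X ^ n - 1) = 0 ↔ (X ^ n - 1 : F[X]) ∣ p :=
  modByMonic_eq_zero_iff_dvd (monicD n hn)

lemma modD_mul (n : ℕ) (hn : 0 < n) (p q : F[X]) :
    (p * q) %ₘ (X ^ n - 1)
      = ((p %ₘ (X ^ n - 1)) * (q %ₘ (X ^ n - 1))) %ₘ (X ^ n - 1) := by
  have hm := monicD (F := F) n hn
  apply modByMonic_eq_of_dvd_sub hm
  have h1 : (X ^ n - 1 : F[X]) ∣ p - p %ₘ (X ^ n - 1) :=
    ⟨p /ₘ (X ^ n - 1), by rw [modByMonic_eq_sub_mul_div p (X ^ n - 1)]; ring⟩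
  have h2 : (X ^ n - 1 : F[X]) ∣ q - q %ₘ (X ^ n - 1) :=
    ⟨q /ₘ (X ^ n - 1), by rw [modByMonic_eq_sub_mul_div q (X ^ n - 1)]; ring⟩
  have key : p * q - (p %ₘ (X ^ n - 1)) * (q %ₘ (X ^ n - 1))
      = (p - p %ₘ (X ^ n - 1)) * q + (p %ₘ (X ^ n - 1)) * (q - q %ₘ (X ^ n - 1)) := by
    ring
  rw [key]
  exact dvd_add (h1.mul_right _) (h2.mul_left _)



lemma count_core {α : Type*} [DecidableEq α] (S T A B : Finset α)
    (h1 : A \ B ⊆ S ∩ T) (h2 : B ⊆ S ∪ T) :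
    2 * (A \ B).card + B.card ≤ S.card + T.card := by
  have hie := Finset.card_inter_add_card_union S T
  have hsub : (A \ B) ∪ B ⊆ S ∪ T :=
    Finset.union_subset (h1.trans (Finset.inter_subset_left.trans Finset.subset_union_left)) h2
  have hd : Disjoint (A \ B) B := Finset.sdiff_disjoint
  have h3 : (A \ B).card + B.card ≤ (S ∪ T).card := by
    rw [← Finset.card_union_of_disjoint hd]
    exact Finset.card_le_card hsub
  have h4 : (A \ B).card ≤ (S ∩ T).card := Finset.card_le_card h1
  omega

lemma mem_support_mul_extremes (p q : F[X]) (hp : p ≠ 0) (hq : q ≠ 0) :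
    p.natTrailingDegree + q.natTrailingDegree ∈ (p * q).support ∧
    p.natDegree + q.natDegree ∈ (p * q).support := by
  have hpq : p * q ≠ 0 := mul_ne_zero hp hq
  constructor
  · rw [mem_support_iff, ← natTrailingDegree_mul hp hq]
    exact fun h => hpq (coeff_natTrailingDegree_eq_zero.mp h)
  · rw [mem_support_iff, ← natDegree_mul hp hq]
    exact fun h => hpq (leadingCoeff_eq_zero.mp h)

lemma two_le_wt (u g : F[X]) (hu : u ≠ 0) (hg : g ≠ 0)
    (h0 : g.coeff 0 ≠ 0) (hdg : 0 < g.natDegree) :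
    2 ≤ (u * g).support.card := by
  obtain ⟨h1, h2⟩ := mem_support_mul_extremes u g hu hg
  have hg0 : g.natTrailingDegree = 0 := Nat.le_zero.mp (natTrailingDegree_le_of_ne_zero h0)
  have hne : u.natTrailingDegree + g.natTrailingDegree ≠ u.natDegree + g.natDegree := by
    have := natTrailingDegree_le_natDegree u
    omega
  calc 2 = ({u.natTrailingDegree + g.natTrailingDegree, u.natDegree + g.natDegree} :
        Finset ℕ).card := (Finset.card_pair hne).symm
    _ ≤ _ := Finset.card_le_card (by
        intro x hx
        rcases Finset.mem_insert.mp hx with rfl | hx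
        · exact h1
        · rw [Finset.mem_singleton] at hx; subst hx; exact h2)

lemma exists_pow_mul (n : ℕ) (hn : 0 < n) :
    ∀ N (u : F[X]), u ≠ 0 → u.natDegree ≤ N →
      ∃ m u₀, u = (X ^ n - 1) ^ m * u₀ ∧ ¬ (X ^ n - 1 : F[X]) ∣ u₀ := by
  have hdegD : (X ^ n - 1 : F[X]).natDegree = n := by
    rw [← C_1 (R := F)]; exact natDegree_X_pow_sub_C
  have hD0 : (X ^ n - 1 : F[X]) ≠ 0 := by
    intro h
    have : (X ^ n - 1 : F[X]).natDegree = 0 := by rw [h]; simp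
    omega
  intro N
  induction N with
  | zero =>
      intro u hu hdeg
      refine ⟨0, u, by simp, fun hdvd => ?_⟩
      have := natDegree_le_of_dvd hdvd hu
      omega
  | succ N ih =>
      intro u hu hdeg
      by_cases hdvd : (X ^ n - 1 : F[X]) ∣ u
      · obtain ⟨u', rfl⟩ := hdvd
        have hu' : u' ≠ 0 := right_ne_zero_of_mul hu
        have hdeg' : u'.natDegree ≤ N := by
          have := natDegree_mul hD0 hu'
          omega
        obtain ⟨m, u₀, heq, h₀⟩ := ih u' hu' hdeg'
        exact ⟨m + 1, u₀, by rw [heq]; ring, h₀⟩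
      · exact ⟨0, u, by simp, hdvd⟩

lemma cl_subset (n : ℕ) (hn : 0 < n) (q : F[X]) :
    q.support.image (· % n) ⊆ ((X ^ n - 1) * q).support.image (· % n) := by
  intro j hj
  obtain ⟨i₀, hi₀, hij⟩ := Finset.mem_image.mp hj
  set s := q.support.filter (fun i => i % n = j) with hs
  have hsne : s.Nonempty := ⟨i₀, Finset.mem_filter.mpr ⟨hi₀, hij⟩⟩
  have his : s.min' hsne ∈ q.support ∧ s.min' hsne % n = j :=
    Finset.mem_filter.mp (s.min'_mem hsne)
  set i := s.min' hsne
  have hcoeff : ((X ^ n - 1) * q).coeff i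
      = (if n ≤ i then q.coeff (i - n) else 0) - q.coeff i := by
    rw [sub_mul, one_mul, coeff_sub, coeff_X_pow_mul']
  have hlow : (if n ≤ i then q.coeff (i - n) else 0) = 0 := by
    split_ifs with h
    · by_contra hne
      have hmem : i - n ∈ s := by
        rw [hs, Finset.mem_filter]
        refine ⟨mem_support_iff.mpr hne, ?_⟩
        rw [← his.2]
        conv_rhs => rw [show i = n + (i - n) by omega]
        rw [Nat.add_mod_left]
      have := s.min'_le _ hmem
      omega
    · rfl
  refine Finset.mem_image.mpr ⟨i, ?_, his.2⟩
  rw [mem_support_iff, hcoeff, hlow, zero_sub]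
  simpa using mem_support_iff.mp his.1

lemma wt_D_mul (n : ℕ) (hn : 0 < n) (q : F[X]) :
    2 * (q.support.image (· % n)).card ≤ ((X ^ n - 1) * q).support.card := by
  set P := ((X ^ n - 1) * q).support with hP
  have htwo : ∀ j ∈ q.support.image (· % n),
      2 ≤ (P.filter (fun i => i % n = j)).card := by
    intro j hj
    obtain ⟨i₀, hi₀, hij⟩ := Finset.mem_image.mp hj
    set s := q.support.filter (fun i => i % n = j) with hs
    have hsne : s.Nonempty := ⟨i₀, Finset.mem_filter.mpr ⟨hi₀, hij⟩⟩
    have hmin : s.min' hsne ∈ q.support ∧ s.min' hsne % n = j :=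
      Finset.mem_filter.mp (s.min'_mem hsne)
    have hmax : s.max' hsne ∈ q.support ∧ s.max' hsne % n = j :=
      Finset.mem_filter.mp (s.max'_mem hsne)
    set i1 := s.min' hsne
    set M := s.max' hsne
    have hcoeff : ∀ d, ((X ^ n - 1) * q).coeff d
        = (if n ≤ d then q.coeff (d - n) else 0) - q.coeff d := by
      intro d
      rw [sub_mul, one_mul, coeff_sub, coeff_X_pow_mul']
    have h1 : i1 ∈ P.filter (fun i => i % n = j) := by
      rw [Finset.mem_filter, hP, mem_support_iff, hcoeff]
      refine ⟨?_, hmin.2⟩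
      have hlow : (if n ≤ i1 then q.coeff (i1 - n) else 0) = 0 := by
        split_ifs with h
        · by_contra hne
          have hmem : i1 - n ∈ s := by
            rw [hs, Finset.mem_filter]
            refine ⟨mem_support_iff.mpr hne, ?_⟩
            rw [← hmin.2]
            conv_rhs => rw [show i1 = n + (i1 - n) by omega]
            rw [Nat.add_mod_left]
          have := s.min'_le _ hmem
          omega
        · rfl
      rw [hlow, zero_sub]
      simpa using mem_support_iff.mp hmin.1
    have h2 : n + M ∈ P.filter (fun i => i % n = j) := by
      rw [Finset.mem_filter, hP, mem_support_iff, hcoeff]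
      constructor
      · have hhi : q.coeff (n + M) = 0 := by
          by_contra hne
          have hmem : n + M ∈ s := by
            rw [hs, Finset.mem_filter]
            exact ⟨mem_support_iff.mpr hne, by rw [Nat.add_mod_left, hmax.2]⟩
          have := s.le_max' _ hmem
          omega
        rw [if_pos (by omega : n ≤ n + M), Nat.add_sub_cancel_left, hhi, sub_zero]
        exact mem_support_iff.mp hmax.1
      · rw [Nat.add_mod_left, hmax.2]
    have hne12 : i1 ≠ n + M := by
      have := s.min'_le _ (s.max'_mem hsne)
      omega
    calc 2 = ({i1, n + M} : Finset ℕ).card := (Finset.card_pair hne12).symm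
      _ ≤ _ := Finset.card_le_card (by
          intro x hx
          rcases Finset.mem_insert.mp hx with rfl | hx
          · exact h1
          · rw [Finset.mem_singleton] at hx; subst hx; exact h2)
  calc 2 * (q.support.image (· % n)).card
      = ∑ _j ∈ q.support.image (· % n), 2 := by
        rw [Finset.sum_const, smul_eq_mul, mul_comm]
    _ ≤ ∑ j ∈ q.support.image (· % n), (P.filter (fun i => i % n = j)).card :=
        Finset.sum_le_sum htwo
    _ ≤ ∑ j ∈ P.image (· % n), (P.filter (fun i => i % n = j)).card := by
        refine Finset.sum_le_sum_of_subset_of_nonneg (cl_subset n hn q) ?_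
        intros; exact Nat.zero_le _
    _ = P.card := (Finset.card_eq_sum_card_image (· % n) P).symm

lemma cl_subset_pow (n : ℕ) (hn : 0 < n) (q : F[X]) (m : ℕ) :
    q.support.image (· % n) ⊆ ((X ^ n - 1) ^ m * q).support.image (· % n) := by
  induction m with
  | zero => simp
  | succ m ih =>
      have h : (X ^ n - 1 : F[X]) ^ (m + 1) * q = (X ^ n - 1) * ((X ^ n - 1) ^ m * q) := by
        ring
      rw [h]
      exact ih.trans (cl_subset n hn _)

lemma wt_D_pow_mul (n : ℕ) (hn : 0 < n) (q : F[X]) (m : ℕ) (hm : 0 < m) :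
    2 * (q.support.image (· % n)).card ≤ ((X ^ n - 1) ^ m * q).support.card := by
  obtain ⟨m', rfl⟩ : ∃ m', m = m' + 1 := ⟨m - 1, by omega⟩
  have h1 : (X ^ n - 1 : F[X]) ^ (m' + 1) * q = (X ^ n - 1) * ((X ^ n - 1) ^ m' * q) := by
    ring
  rw [h1]
  refine le_trans ?_ (wt_D_mul n hn _)
  exact Nat.mul_le_mul_left 2 (Finset.card_le_card (cl_subset_pow n hn q m'))

lemma card_filter_eq_support (n : ℕ) (p : F[X]) (hp : p.degree < (n : ℕ)) :
    (Finset.univ.filter fun i : Fin n => p.coeff ↑i ≠ 0).card = p.support.card := by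
  refine Finset.card_bij (fun i _ => (i : ℕ)) ?_ ?_ ?_
  · intro a ha
    rw [Finset.mem_filter] at ha
    exact mem_support_iff.mpr ha.2
  · intro a _ b _ h
    exact Fin.val_injective h
  · intro b hb
    have hbn : b < n := by
      have h := le_degree_of_ne_zero (mem_support_iff.mp hb)
      exact_mod_cast lt_of_le_of_lt h hp
    exact ⟨⟨b, hbn⟩, Finset.mem_filter.mpr ⟨Finset.mem_univ _, mem_support_iff.mp hb⟩, rfl⟩

lemma rev_mod_invol (n : ℕ) (hn : 0 < n) (i : ℕ) (hi : i < n) :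
    (n - (n - i) % n) % n = i := by
  rcases Nat.eq_zero_or_pos i with rfl | hpos
  · simp
  · rw [Nat.mod_eq_of_lt (by omega : n - i < n), Nat.mod_eq_of_lt (by omega : n - (n - i) < n)]
    omega


lemma degD (n : ℕ) (hn : 0 < n) : (X ^ n - 1 : F[X]).degree = (n : ℕ) := by
  rw [← C_1 (R := F)]; exact degree_X_pow_sub_C hn 1

lemma ortho (n t : ℕ) (hn : 0 < n) (f w w' : F[X]) (hD : (X ^ n - 1 : F[X]) ∣ w * f) :
    ∑ i : Fin n, ((w * X ^ t) %ₘ (X ^ n - 1)).coeff ((n - ↑i) % n)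
      * ((f * w') %ₘ (X ^ n - 1)).coeff ↑i = 0 := by
  have hm := monicD (F := F) n hn
  set ρ := (w * X ^ t) %ₘ (X ^ n - 1) with hρdef
  set σ := (f * w') %ₘ (X ^ n - 1) with hσdef
  have hρdeg : ρ.degree < (n : ℕ) := by
    have h := degree_modByMonic_lt (w * X ^ t) hm
    rwa [degD n hn] at h
  have hσdeg : σ.degree < (n : ℕ) := by
    have h := degree_modByMonic_lt (f * w') hm
    rwa [degD n hn] at h
  have hρn : ∀ j, n ≤ j → ρ.coeff j = 0 := fun j hj =>
    coeff_eq_zero_of_degree_lt (lt_of_lt_of_le hρdeg (by exact_mod_cast hj))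
  have hσn : ∀ j, n ≤ j → σ.coeff j = 0 := fun j hj =>
    coeff_eq_zero_of_degree_lt (lt_of_lt_of_le hσdeg (by exact_mod_cast hj))
  have h0 : (ρ * σ) %ₘ (X ^ n - 1) = 0 := by
    rw [hρdef, hσdef, ← modD_mul n hn (w * X ^ t) (f * w'), modD_eq_zero_iff n hn]
    have heq : (w * X ^ t) * (f * w') = (w * f) * (X ^ t * w') := by ring
    rw [heq]
    exact hD.mul_right _
  have h2 : (ρ * σ).coeff 0 + (ρ * σ).coeff n = 0 := by
    have hc := modD_coeff n hn (ρ * σ) 0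
    rw [h0, coeff_zero] at hc
    have hsub : (ρ * σ).support.filter (fun i => i % n = 0) ⊆ ({0, n} : Finset ℕ) := by
      intro i hi
      rw [Finset.mem_filter, mem_support_iff] at hi
      have hin : i < 2 * n := by
        by_contra hge
        push_neg at hge
        apply hi.1
        rw [coeff_mul]
        refine Finset.sum_eq_zero fun ab hab => ?_
        rw [Finset.HasAntidiagonal.mem_antidiagonal] at hab
        rcases le_or_gt n ab.1 with h | h
        · rw [hρn _ h, zero_mul]
        · rw [hσn ab.2 (by omega), mul_zero]
      obtain ⟨c, hc'⟩ := Nat.dvd_of_mod_eq_zero hi.2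
      have hc2 : c ≤ 1 := by
        by_contra hc2
        push_neg at hc2
        have : 2 * n ≤ n * c := by
          calc 2 * n = n * 2 := by ring
          _ ≤ n * c := Nat.mul_le_mul_left n hc2
        omega
      interval_cases c
      · simp at hc'
        simp [hc']
      · simp at hc'
        simp [hc']
    have hsum : ∑ i ∈ (ρ * σ).support.filter (fun i => i % n = 0), (ρ * σ).coeff i
        = ∑ i ∈ ({0, n} : Finset ℕ), (ρ * σ).coeff i := by
      refine Finset.sum_subset hsub fun x hx hnx => ?_
      by_contra hne
      apply hnx
      rw [Finset.mem_filter, mem_support_iff]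
      refine ⟨hne, ?_⟩
      rcases Finset.mem_insert.mp hx with rfl | hx'
      · exact Nat.zero_mod n
      · rw [Finset.mem_singleton] at hx'; rw [hx']; exact Nat.mod_self n
    rw [hsum, Finset.sum_pair (by omega : (0 : ℕ) ≠ n)] at hc
    exact hc.symm
  have h3 : ∑ i : Fin n, ρ.coeff ((n - ↑i) % n) * σ.coeff ↑i
      = (ρ * σ).coeff 0 + (ρ * σ).coeff n := by
    rw [Fin.sum_univ_eq_sum_range (fun i => ρ.coeff ((n - i) % n) * σ.coeff i) n]
    have hmuln : (ρ * σ).coeff n = ∑ i ∈ Finset.range (n + 1), ρ.coeff (n - i) * σ.coeff i := by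
      rw [mul_comm ρ σ, coeff_mul, Finset.Nat.sum_antidiagonal_eq_sum_range_succ_mk]
      exact Finset.sum_congr rfl fun i _ => mul_comm _ _
    rw [mul_coeff_zero, hmuln]
    rw [Finset.sum_range_succ, hσn n le_rfl, mul_zero, add_zero]
    obtain ⟨m, rfl⟩ : ∃ m, n = m + 1 := ⟨n - 1, by omega⟩
    rw [Finset.sum_range_succ' (fun i => ρ.coeff ((m + 1 - i) % (m + 1)) * σ.coeff i) m]
    rw [Finset.sum_range_succ' (fun i => ρ.coeff (m + 1 - i) * σ.coeff i) m]
    rw [hρn (m + 1 - 0) (by omega), zero_mul, add_zero]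
    rw [Nat.sub_zero, Nat.mod_self]
    rw [add_comm]
    congr 1
    refine Finset.sum_congr rfl fun i hi => ?_
    rw [Finset.mem_range] at hi
    rw [Nat.mod_eq_of_lt (by omega : m + 1 - (i + 1) < m + 1)]
  rw [h3, h2]

lemma dual_bound (n t : ℕ) (hn : 0 < n) (f w : F[X]) (d₂ : ℕ)
    (hdual : ∀ v : Fin n → F, v ≠ 0 →
      (∀ u : Polynomial F, ∑ i : Fin n, v i * ((f * u) %ₘ (X ^ n - 1)).coeff i = 0) →
      d₂ ≤ (Finset.univ.filter fun i => v i ≠ 0).card)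
    (hDf : (X ^ n - 1 : F[X]) ∣ w * f) (hρ : (w * X ^ t) %ₘ (X ^ n - 1) ≠ 0) :
    d₂ ≤ ((w * X ^ t) %ₘ (X ^ n - 1)).support.card := by
  set ρ := (w * X ^ t) %ₘ (X ^ n - 1) with hρdef
  set v : Fin n → F := fun i => ρ.coeff ((n - ↑i) % n) with hv
  have hρdeg : ρ.degree < (n : ℕ) := by
    have h := degree_modByMonic_lt (w * X ^ t) (monicD (F := F) n hn)
    rwa [degD n hn] at h
  have hV : v ≠ 0 := by
    obtain ⟨j, hjs⟩ := Polynomial.nonempty_support_iff.mpr hρ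
    have hj : ρ.coeff j ≠ 0 := mem_support_iff.mp hjs
    have hjn : j < n := by
      have h := le_degree_of_ne_zero hj
      exact_mod_cast lt_of_le_of_lt h hρdeg
    intro h0
    have := congrFun h0 ⟨(n - j) % n, Nat.mod_lt _ hn⟩
    rw [hv] at this
    simp only [Pi.zero_apply] at this
    rw [rev_mod_invol n hn j hjn] at this
    exact hj this
  have hle := hdual v hV (fun u' => ortho n t hn f w u' hDf)
  refine le_trans hle ?_
  refine Finset.card_le_card_of_injOn (fun i : Fin n => (n - (i : ℕ)) % n) ?_ ?_
  · intro i hi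
    rw [Finset.coe_filter] at hi
    exact mem_support_iff.mpr hi.2
  · intro a _ b _ h
    have ha := rev_mod_invol n hn a a.isLt
    have hb := rev_mod_invol n hn b b.isLt
    apply Fin.ext
    simp only at h
    rw [← ha, ← hb, h]

end Stmt7A


open Stmt7A

/-- Let `F` be a field of characteristic `2`, `n > k ≥ 1`, `r = n - k`, and let
`f = ∑ βᵢ Xⁱ` be a degree-`r` divisor of `Xⁿ - 1` with `β₀ ≠ 0` and `β_r ≠ 0`.
Let `C` be the cyclic code of length `n` generated by `f` (codewords being the
coefficient vectors of `f·u mod (Xⁿ - 1)`), assume every nonzero codeword of `C`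
has Hamming weight at least `d₁` and every nonzero codeword of the dual of `C`
has Hamming weight at least `d₂`, and set `d = min d₁ d₂`.  Fix `0 < t < r` and
put `ĝ₁ = f - β_t Xᵗ + Xᵗ`, `ĝ₂ = f - β_t Xᵗ`.  Then for every nonzero
`u ∈ F[X]`, `wt(u·ĝ₁) + wt(u·ĝ₂) ≥ d + 2`, i.e. the free distance of the `(2,1)`
convolutional code with generator matrix `(ĝ₁, ĝ₂)` is at least `d + 2`. -/
theorem stmt_7 (F : Type*) [Field F] [CharP F 2]
    (n k : ℕ) (hk : 1 ≤ k) (hkn : k < n)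
    (f : Polynomial F) (hdeg : f.natDegree = n - k)
    (hβ0 : f.coeff 0 ≠ 0) (hβr : f.coeff (n - k) ≠ 0)
    (hdvd : f ∣ X ^ n - 1)
    (d₁ d₂ : ℕ)
    (hC : ∀ u : Polynomial F,
      (fun i : Fin n => ((f * u) %ₘ (X ^ n - 1)).coeff i) ≠ 0 →
      d₁ ≤ (Finset.univ.filter fun i : Fin n =>
              ((f * u) %ₘ (X ^ n - 1)).coeff i ≠ 0).card)
    (hdual : ∀ v : Fin n → F, v ≠ 0 →
      (∀ u : Polynomial F,
        ∑ i : Fin n, v i * ((f * u) %ₘ (X ^ n - 1)).coeff i = 0) →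
      d₂ ≤ (Finset.univ.filter fun i => v i ≠ 0).card)
    (t : ℕ) (ht0 : 0 < t) (htr : t < n - k)
    (u : Polynomial F) (hu : u ≠ 0) :
    min d₁ d₂ + 2 ≤
      (u * (f - C (f.coeff t) * X ^ t + X ^ t)).support.card +
      (u * (f - C (f.coeff t) * X ^ t)).support.card := by
  classical
  have hn : 0 < n := by omega
  set β := f.coeff t with hβdef
  set g₂ := f - C β * X ^ t with hg₂
  set g₁ := g₂ + X ^ t with hg₁
  have hf0 : f ≠ 0 := fun h => hβ0 (by simp [h])
  have hrpos : 0 < n - k := by omega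
  -- coefficient facts for g₁ g₂
  have hg₂c0 : g₂.coeff 0 = f.coeff 0 := by
    rw [hg₂, coeff_sub, coeff_C_mul, coeff_X_pow, if_neg (by omega : ¬ 0 = t), mul_zero,
      sub_zero]
  have hg₁c0 : g₁.coeff 0 = f.coeff 0 := by
    rw [hg₁, coeff_add, coeff_X_pow, if_neg (by omega : ¬ 0 = t), add_zero, hg₂c0]
  have hg₂cr : g₂.coeff (n - k) = f.coeff (n - k) := by
    rw [hg₂, coeff_sub, coeff_C_mul, coeff_X_pow, if_neg (by omega : ¬ n - k = t), mul_zero,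
      sub_zero]
  have hg₁cr : g₁.coeff (n - k) = f.coeff (n - k) := by
    rw [hg₁, coeff_add, coeff_X_pow, if_neg (by omega : ¬ n - k = t), add_zero, hg₂cr]
  have hg₂c0ne : g₂.coeff 0 ≠ 0 := by rw [hg₂c0]; exact hβ0
  have hg₁c0ne : g₁.coeff 0 ≠ 0 := by rw [hg₁c0]; exact hβ0
  have hg₂0 : g₂ ≠ 0 := fun h => hg₂c0ne (by rw [h]; simp)
  have hg₁0 : g₁ ≠ 0 := fun h => hg₁c0ne (by rw [h]; simp)
  have hg₂dpos : 0 < g₂.natDegree :=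
    lt_of_lt_of_le hrpos (le_natDegree_of_ne_zero (by rw [hg₂cr]; exact hβr))
  have hg₁dpos : 0 < g₁.natDegree :=
    lt_of_lt_of_le hrpos (le_natDegree_of_ne_zero (by rw [hg₁cr]; exact hβr))
  -- trivial case
  by_cases hd4 : min d₁ d₂ + 2 ≤ 4
  · have w1 := two_le_wt u g₁ hu hg₁0 hg₁c0ne hg₁dpos
    have w2 := two_le_wt u g₂ hu hg₂0 hg₂c0ne hg₂dpos
    omega
  push_neg at hd4
  have hd3 : 3 ≤ min d₁ d₂ := by omega
  -- key coefficient relations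
  have key : ∀ (w : F[X]) (i : ℕ),
      (w * g₁).coeff i
        = (w * f).coeff i - β * (w * X ^ t).coeff i + (w * X ^ t).coeff i ∧
      (w * g₂).coeff i = (w * f).coeff i - β * (w * X ^ t).coeff i := by
    intro w i
    constructor
    · have h : w * g₁ = w * f - C β * (w * X ^ t) + w * X ^ t := by rw [hg₁, hg₂]; ring
      rw [h, coeff_add, coeff_sub, coeff_C_mul]
    · have h : w * g₂ = w * f - C β * (w * X ^ t) := by rw [hg₂]; ring
      rw [h, coeff_sub, coeff_C_mul]
  have keyE : ∀ (w : F[X]) (i : ℕ), (w * X ^ t).coeff i = 0 →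
      (w * g₁).coeff i = (w * f).coeff i ∧ (w * g₂).coeff i = (w * f).coeff i := by
    intro w i h
    exact ⟨by rw [(key w i).1, h]; ring, by rw [(key w i).2, h]; ring⟩
  have keyN : ∀ (w : F[X]) (i : ℕ), (w * X ^ t).coeff i ≠ 0 →
      (w * g₁).coeff i ≠ 0 ∨ (w * g₂).coeff i ≠ 0 := by
    intro w i h
    by_contra hc
    push_neg at hc
    have hdiff : (w * g₁).coeff i - (w * g₂).coeff i = (w * X ^ t).coeff i := by
      rw [(key w i).1, (key w i).2]; ring
    rw [hc.1, hc.2, sub_zero] at hdiff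
    exact h hdiff.symm
  -- class-level inclusions
  have hABcl : ∀ w : F[X],
      (w * f).support.image (· % n) \ (w * X ^ t).support.image (· % n)
        ⊆ ((w * g₁).support.image (· % n)) ∩ ((w * g₂).support.image (· % n)) := by
    intro w j hj
    rw [Finset.mem_sdiff] at hj
    obtain ⟨i, hi, hij⟩ := Finset.mem_image.mp hj.1
    have he : (w * X ^ t).coeff i = 0 := by
      by_contra hh
      exact hj.2 (Finset.mem_image.mpr ⟨i, mem_support_iff.mpr hh, hij⟩)
    obtain ⟨e1, e2⟩ := keyE w i he
    have hc := mem_support_iff.mp hi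
    rw [Finset.mem_inter]
    exact ⟨Finset.mem_image.mpr ⟨i, mem_support_iff.mpr (by rw [e1]; exact hc), hij⟩,
      Finset.mem_image.mpr ⟨i, mem_support_iff.mpr (by rw [e2]; exact hc), hij⟩⟩
  have hBcl : ∀ w : F[X],
      (w * X ^ t).support.image (· % n)
        ⊆ ((w * g₁).support.image (· % n)) ∪ ((w * g₂).support.image (· % n)) := by
    intro w j hj
    obtain ⟨i, hi, hij⟩ := Finset.mem_image.mp hj
    rcases keyN w i (mem_support_iff.mp hi) with h | h
    · exact Finset.mem_union_left _ (Finset.mem_image.mpr ⟨i, mem_support_iff.mpr h, hij⟩)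
    · exact Finset.mem_union_right _ (Finset.mem_image.mpr ⟨i, mem_support_iff.mpr h, hij⟩)
  -- code distance bound
  have code_bound : ∀ w : F[X], (f * w) %ₘ (X ^ n - 1) ≠ 0 →
      d₁ ≤ ((f * w) %ₘ (X ^ n - 1)).support.card := by
    intro w hw
    have hdegm : ((f * w) %ₘ (X ^ n - 1)).degree < (n : ℕ) := by
      have h := degree_modByMonic_lt (f * w) (monicD (F := F) n hn)
      rwa [degD n hn] at h
    have hvne : (fun i : Fin n => ((f * w) %ₘ (X ^ n - 1)).coeff i) ≠ 0 := by
      obtain ⟨j, hjs⟩ := Polynomial.nonempty_support_iff.mpr hw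
      have hj := mem_support_iff.mp hjs
      have hjn : j < n := by
        have h := le_degree_of_ne_zero hj
        exact_mod_cast lt_of_le_of_lt h hdegm
      intro h0
      exact hj (congrFun h0 ⟨j, hjn⟩)
    have h := hC w hvne
    rwa [card_filter_eq_support n _ hdegm] at h
  -- coprimality
  have hcop : IsCoprime (X ^ n - 1 : F[X]) ((X : F[X]) ^ t) := by
    have hbase : IsCoprime (X ^ n - 1 : F[X]) (X : F[X]) := by
      refine ⟨-1, X ^ (n - 1), ?_⟩
      have hX : (X : F[X]) ^ (n - 1) * X = X ^ n := by
        rw [← pow_succ]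
        congr 1
        omega
      rw [hX]
      ring
    exact hbase.pow_right
  -- factor out (X^n-1)^m
  obtain ⟨m, u₀, hueq, hu₀nd⟩ := exists_pow_mul n hn u.natDegree u hu le_rfl
  have hu₀ : u₀ ≠ 0 := by
    rintro rfl
    rw [mul_zero] at hueq
    exact hu hueq
  rcases Nat.eq_zero_or_pos m with rfl | hm
  · -- m = 0 : position-level argument
    have hueq' : u = u₀ := by rw [hueq, pow_zero, one_mul]
    have hund : ¬ (X ^ n - 1 : F[X]) ∣ u := by rw [hueq']; exact hu₀nd
    have hABpos : (u * f).support \ (u * X ^ t).support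
        ⊆ (u * g₁).support ∩ (u * g₂).support := by
      intro i hi
      rw [Finset.mem_sdiff] at hi
      have he : (u * X ^ t).coeff i = 0 := by
        by_contra hh
        exact hi.2 (mem_support_iff.mpr hh)
      obtain ⟨e1, e2⟩ := keyE u i he
      have hc := mem_support_iff.mp hi.1
      rw [Finset.mem_inter, mem_support_iff, mem_support_iff, e1, e2]
      exact ⟨hc, hc⟩
    have hBpos : (u * X ^ t).support ⊆ (u * g₁).support ∪ (u * g₂).support := by
      intro i hi
      rcases keyN u i (mem_support_iff.mp hi) with h | h
      · exact Finset.mem_union_left _ (mem_support_iff.mpr h)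
      · exact Finset.mem_union_right _ (mem_support_iff.mpr h)
    have hcore := count_core ((u * g₁).support) ((u * g₂).support) ((u * f).support)
      ((u * X ^ t).support) hABpos hBpos
    -- endpoints
    have hend : 2 ≤ ((u * f).support \ (u * X ^ t).support).card := by
      obtain ⟨hm1, hm2⟩ := mem_support_mul_extremes u f hu hf0
      have hfntd : f.natTrailingDegree = 0 :=
        Nat.le_zero.mp (natTrailingDegree_le_of_ne_zero hβ0)
      have hXt0 : (X : F[X]) ^ t ≠ 0 := pow_ne_zero t X_ne_zero
      have hntd_e : (u * X ^ t).natTrailingDegree = u.natTrailingDegree + t := by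
        rw [natTrailingDegree_mul hu hXt0, natTrailingDegree_X_pow]
      have hnd_e : (u * X ^ t).natDegree = u.natDegree + t := by
        rw [natDegree_mul hu hXt0, natDegree_X_pow]
      have hb : ∀ i ∈ (u * X ^ t).support,
          u.natTrailingDegree + t ≤ i ∧ i ≤ u.natDegree + t := by
        intro i hi
        constructor
        · rw [← hntd_e]
          exact natTrailingDegree_le_of_ne_zero (mem_support_iff.mp hi)
        · rw [← hnd_e]
          exact le_natDegree_of_mem_supp i hi
      have hp1 : u.natTrailingDegree + f.natTrailingDegree ∉ (u * X ^ t).support := by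
        intro hmem
        have := (hb _ hmem).1
        omega
      have hp2 : u.natDegree + f.natDegree ∉ (u * X ^ t).support := by
        intro hmem
        have := (hb _ hmem).2
        omega
      have hne : u.natTrailingDegree + f.natTrailingDegree
          ≠ u.natDegree + f.natDegree := by
        have h1 := natTrailingDegree_le_natDegree u
        omega
      calc 2 = ({u.natTrailingDegree + f.natTrailingDegree,
            u.natDegree + f.natDegree} : Finset ℕ).card := (Finset.card_pair hne).symm
        _ ≤ _ := Finset.card_le_card (by
            intro x hx
            rcases Finset.mem_insert.mp hx with rfl | hx
            · exact Finset.mem_sdiff.mpr ⟨hm1, hp1⟩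
            · rw [Finset.mem_singleton] at hx
              subst hx
              exact Finset.mem_sdiff.mpr ⟨hm2, hp2⟩)
    by_cases hred : (f * u) %ₘ (X ^ n - 1) = 0
    · -- dual case
      have hDf : (X ^ n - 1 : F[X]) ∣ u * f := by
        rw [mul_comm]
        exact (modD_eq_zero_iff n hn _).mp hred
      have hρ : (u * X ^ t) %ₘ (X ^ n - 1) ≠ 0 := by
        intro hz
        exact hund (hcop.dvd_of_dvd_mul_right ((modD_eq_zero_iff n hn _).mp hz))
      have hd2 := dual_bound n t hn f u d₂ hdual hDf hρ
      have hchain : ((u * X ^ t) %ₘ (X ^ n - 1)).support.card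
          ≤ (u * X ^ t).support.card :=
        le_trans (Finset.card_le_card (modD_support_subset n hn _)) Finset.card_image_le
      have hmin := min_le_right d₁ d₂
      omega
    · -- code case
      have hd1 := code_bound u hred
      have hchain : ((f * u) %ₘ (X ^ n - 1)).support.card ≤ (u * f).support.card := by
        refine le_trans (Finset.card_le_card (modD_support_subset n hn _)) ?_
        refine le_trans Finset.card_image_le ?_
        rw [mul_comm]
      have hAle : (u * f).support.card
          ≤ ((u * f).support \ (u * X ^ t).support).card + (u * X ^ t).support.card :=
        Finset.card_le_card_sdiff_add_card
      have hmin := min_le_left d₁ d₂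
      omega
  · -- m ≥ 1 : class-level argument
    have hrw1 : u * g₁ = (X ^ n - 1) ^ m * (u₀ * g₁) := by rw [hueq]; ring
    have hrw2 : u * g₂ = (X ^ n - 1) ^ m * (u₀ * g₂) := by rw [hueq]; ring
    have hw1 : 2 * ((u₀ * g₁).support.image (· % n)).card ≤ (u * g₁).support.card := by
      rw [hrw1]
      exact wt_D_pow_mul n hn _ m hm
    have hw2 : 2 * ((u₀ * g₂).support.image (· % n)).card ≤ (u * g₂).support.card := by
      rw [hrw2]
      exact wt_D_pow_mul n hn _ m hm
    have hcore := count_core ((u₀ * g₁).support.image (· % n))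
      ((u₀ * g₂).support.image (· % n)) ((u₀ * f).support.image (· % n))
      ((u₀ * X ^ t).support.image (· % n)) (hABcl u₀) (hBcl u₀)
    by_cases hred : (f * u₀) %ₘ (X ^ n - 1) = 0
    · -- dual case
      have hDf : (X ^ n - 1 : F[X]) ∣ u₀ * f := by
        rw [mul_comm]
        exact (modD_eq_zero_iff n hn _).mp hred
      have hρ : (u₀ * X ^ t) %ₘ (X ^ n - 1) ≠ 0 := by
        intro hz
        exact hu₀nd (hcop.dvd_of_dvd_mul_right ((modD_eq_zero_iff n hn _).mp hz))
      have hd2 := dual_bound n t hn f u₀ d₂ hdual hDf hρ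
      have hchain : ((u₀ * X ^ t) %ₘ (X ^ n - 1)).support.card
          ≤ ((u₀ * X ^ t).support.image (· % n)).card :=
        Finset.card_le_card (modD_support_subset n hn _)
      have hmin := min_le_right d₁ d₂
      omega
    · -- code case
      have hd1 := code_bound u₀ hred
      have hchain : ((f * u₀) %ₘ (X ^ n - 1)).support.card
          ≤ ((u₀ * f).support.image (· % n)).card := by
        have h := Finset.card_le_card (modD_support_subset n hn (f * u₀))
        have h2 : (f * u₀).support = (u₀ * f).support := by rw [mul_comm]
        rwa [h2] at h
      have hAle : ((u₀ * f).support.image (· % n)).card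
          ≤ (((u₀ * f).support.image (· % n)) \ ((u₀ * X ^ t).support.image (· % n))).card
            + ((u₀ * X ^ t).support.image (· % n)).card :=
        Finset.card_le_card_sdiff_add_card
      have hmin := min_le_left d₁ d₂
      omega
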